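/- Fix r ≥ 3 and integers n_1, …, n_{r−1} with n_j ≥ 2 for all j, and let n = Π_{j=1}^{r−1} n_j and ñ = n − 1 − Σ_{j=1}^{r−1}(n_j − 1). Index coordinates by tuples x = (x_1, …, x_{r−1}) ∈ Π_j {1, …, n_j}, and for v ∈ ℝ^r define the n×n symmetric matrix Σ(v) by Σ(v)_{x,y} = Σ_{j=1}^{r−1} v_j·1{x_j = y_j} + v_r·1{x = y}. Let ψ ∈ ℝ^r satisfy ψ_j ≥ 0 for j < r and ψ_r > 0 (so Σ(ψ) is positive definite), set A(v,ψ) = Σ(ψ)^{-1/2}Σ(v)Σ(ψ)^{-1/2}, and for v with ‖A(v,ψ)‖_F ≠ 0 set a(v,ψ) = ‖A(v,ψ)‖/‖A(v,ψ)‖_F. Then for every such v ≠ 0, a(v,ψ)² ≤ Σ_{j=1}^{r−1} 1/(n_j − 1) + (r−2)²/ñ ≤ (r−1)/(n_min − 1) + (r−2)²/ñ, where n_min = min_j n_j. -/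

import Mathlib

open Matrix

open Classical in
/-- The positive semidefinite square root of a matrix (junk value `0` off the
positive semidefinite matrices). -/
noncomputable def msqrt {ι : Type*} [Fintype ι] [DecidableEq ι] (M : Matrix ι ι ℝ) :
    Matrix ι ι ℝ :=
  if h : M.PosSemidef then
    (h.1.eigenvectorUnitary : Matrix ι ι ℝ) * diagonal (fun i => Real.sqrt (h.1.eigenvalues i)) *
      (star h.1.eigenvectorUnitary : Matrix ι ι ℝ)
  else 0

/-- The spectral norm of a real square matrix. -/
noncomputable def specNorm {ι : Type*} [Fintype ι] [DecidableEq ι]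
    (M : Matrix ι ι ℝ) : ℝ :=
  ‖Matrix.toEuclideanCLM (𝕜 := ℝ) M‖

/-- The Frobenius norm of a real matrix. -/
noncomputable def frobNorm {ι : Type*} [Fintype ι] (M : Matrix ι ι ℝ) : ℝ :=
  Real.sqrt (∑ i, ∑ j, (M i j) ^ 2)

/-- The covariance matrix of the crossed random effects model, with rows and columns
indexed by tuples `x ∈ Π_j {1,…,n_j}`:
`Σ(v)_{x,y} = ∑_{j<r} v_j 1{x_j = y_j} + v_r 1{x = y}`. -/
noncomputable def SigmaCross {rm1 : ℕ} (nn : Fin rm1 → ℕ) (v : Fin (rm1 + 1) → ℝ) :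
    Matrix (∀ j, Fin (nn j)) (∀ j, Fin (nn j)) ℝ :=
  Matrix.of fun x y =>
    (∑ j, if x j = y j then v j.castSucc else 0) + (if x = y then v (Fin.last rm1) else 0)

open Finset

namespace Stmt17Aux

variable {rm1 : ℕ} {nn : Fin rm1 → ℕ}

/-- per-coordinate factor of the projection `Q S`. -/
noncomputable def q (nn : Fin rm1 → ℕ) (S : Finset (Fin rm1)) (j : Fin rm1)
    (a b : Fin (nn j)) : ℝ :=
  if j ∈ S then (if a = b then 1 else 0) - (nn j : ℝ)⁻¹ else (nn j : ℝ)⁻¹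

/-- The orthogonal projection onto the eigenspace indexed by `S`. -/
noncomputable def Q (nn : Fin rm1 → ℕ) (S : Finset (Fin rm1)) :
    Matrix (∀ j, Fin (nn j)) (∀ j, Fin (nn j)) ℝ :=
  Matrix.of fun x y => ∏ j, q nn S j (x j) (y j)

lemma q_symm (S : Finset (Fin rm1)) (j : Fin rm1) (a b : Fin (nn j)) :
    q nn S j a b = q nn S j b a := by
  simp [q, eq_comm]

lemma sum_q_mul (hnn : ∀ j, 2 ≤ nn j) (S T : Finset (Fin rm1)) (j : Fin rm1)
    (a b : Fin (nn j)) :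
    ∑ z : Fin (nn j), q nn S j a z * q nn T j z b =
      if (j ∈ S ↔ j ∈ T) then q nn S j a b else 0 := by
  have h0 : (0:ℕ) < nn j := lt_of_lt_of_le (by norm_num) (hnn j)
  have hne : (nn j : ℝ) ≠ 0 := Nat.cast_ne_zero.2 h0.ne'
  have hcard : (Finset.univ : Finset (Fin (nn j))).card = nn j := by simp
  by_cases hS : j ∈ S <;> by_cases hT : j ∈ T <;>
    simp only [q, hS, hT, if_true, if_false, iff_true, iff_false, sub_mul, mul_sub,
      Finset.sum_sub_distrib, ite_mul, mul_ite, one_mul, mul_one, zero_mul, mul_zero,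
      Finset.sum_ite_eq, Finset.sum_ite_eq', Finset.mem_univ, if_true,
      Finset.sum_const, hcard, nsmul_eq_mul, not_true_eq_false, not_false_eq_true] <;>
    field_simp <;> ring

lemma Q_mul_Q (hnn : ∀ j, 2 ≤ nn j) (S T : Finset (Fin rm1)) :
    Q nn S * Q nn T = if S = T then Q nn S else 0 := by
  ext x y
  simp only [Q, mul_apply, of_apply]
  have : ∀ z : (∀ j, Fin (nn j)),
      (∏ j, q nn S j (x j) (z j)) * ∏ j, q nn T j (z j) (y j) =
        ∏ j, (q nn S j (x j) (z j) * q nn T j (z j) (y j)) := fun z =>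
    (Finset.prod_mul_distrib).symm
  rw [Finset.sum_congr rfl fun z _ => this z,
    (Fintype.prod_sum (fun j a => q nn S j (x j) a * q nn T j a (y j))).symm]
  by_cases hST : S = T
  · subst hST
    simp only [if_pos rfl]
    refine Finset.prod_congr rfl fun j _ => ?_
    rw [sum_q_mul hnn, if_pos Iff.rfl]
  · rw [if_neg hST]
    have : ∃ j, ¬ (j ∈ S ↔ j ∈ T) := by
      by_contra h
      push_neg at h
      exact hST (Finset.ext fun j => h j)
    obtain ⟨j, hj⟩ := this
    refine Finset.prod_eq_zero (Finset.mem_univ j) ?_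
    rw [sum_q_mul hnn, if_neg hj]

lemma sum_Q (hnn : ∀ j, 2 ≤ nn j) : ∑ S : Finset (Fin rm1), Q nn S = 1 := by
  ext x y
  simp only [Matrix.sum_apply, Q, of_apply, one_apply]
  classical
  have key : ∀ S : Finset (Fin rm1), ∏ j, q nn S j (x j) (y j) =
      (∏ j ∈ S, ((if x j = y j then (1:ℝ) else 0) - (nn j : ℝ)⁻¹)) *
        ∏ j ∈ Sᶜ, (nn j : ℝ)⁻¹ := by
    intro S
    rw [← Finset.prod_mul_prod_compl S]
    congr 1
    · exact Finset.prod_congr rfl fun j hj => by simp [q, hj]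
    · exact Finset.prod_congr rfl fun j hj => by
        simp [q, (Finset.mem_compl.1 hj)]
  rw [Finset.sum_congr rfl fun S _ => key S, ← Fintype.prod_add]
  have : ∀ j, ((if x j = y j then (1:ℝ) else 0) - (nn j : ℝ)⁻¹) + (nn j : ℝ)⁻¹ =
      (if x j = y j then (1:ℝ) else 0) := fun j => sub_add_cancel _ _
  rw [Finset.prod_congr rfl fun j _ => this j, Finset.prod_boole]
  simp [funext_iff, eq_comm]

lemma trace_Q (hnn : ∀ j, 2 ≤ nn j) (S : Finset (Fin rm1)) :
    (Q nn S).trace = ∏ j ∈ S, ((nn j : ℝ) - 1) := by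
  classical
  simp only [trace, diag_apply, Q, of_apply]
  rw [(Fintype.prod_sum (fun j a => q nn S j a a)).symm]
  have : ∀ j, (∑ a : Fin (nn j), q nn S j a a) =
      if j ∈ S then ((nn j : ℝ) - 1) else 1 := by
    intro j
    have h0 : (0:ℕ) < nn j := lt_of_lt_of_le (by norm_num) (hnn j)
    have hne : (nn j : ℝ) ≠ 0 := Nat.cast_ne_zero.2 h0.ne'
    by_cases hj : j ∈ S
    · simp only [q, hj, if_true, Finset.sum_sub_distrib, Finset.sum_ite_eq,
        Finset.sum_const, Finset.card_univ, Fintype.card_fin, nsmul_eq_mul, mul_one]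
      simp [mul_inv_cancel₀ hne]
    · simp [q, hj, Finset.card_univ, mul_inv_cancel₀ hne]
  rw [Finset.prod_congr rfl fun j _ => this j, Finset.prod_ite_mem]
  simp

lemma Q_transpose (S : Finset (Fin rm1)) : (Q nn S)ᵀ = Q nn S := by
  ext x y
  simp only [transpose_apply, Q, of_apply]
  exact Finset.prod_congr rfl fun j _ => q_symm S j (y j) (x j)

lemma Q_dot_nonneg (hnn : ∀ j, 2 ≤ nn j) (S : Finset (Fin rm1))
    (u : (∀ j, Fin (nn j)) → ℝ) : 0 ≤ u ⬝ᵥ (Q nn S) *ᵥ u := by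
  have h1 : Q nn S = Q nn S * Q nn S := by rw [Q_mul_Q hnn, if_pos rfl]
  rw [h1, ← mulVec_mulVec, dotProduct_mulVec, ← mulVec_transpose, Q_transpose]
  exact Finset.sum_nonneg fun i _ => mul_self_nonneg _

/-- linear combination of the projections `Q S`. -/
noncomputable def lc (nn : Fin rm1 → ℕ) (c : Finset (Fin rm1) → ℝ) :
    Matrix (∀ j, Fin (nn j)) (∀ j, Fin (nn j)) ℝ :=
  ∑ S : Finset (Fin rm1), c S • Q nn S

lemma lc_mul_lc (hnn : ∀ j, 2 ≤ nn j) (c d : Finset (Fin rm1) → ℝ) :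
    lc nn c * lc nn d = lc nn (fun S => c S * d S) := by
  classical
  rw [lc, lc, Finset.sum_mul_sum]
  have key : ∀ S T : Finset (Fin rm1), (c S • Q nn S) * (d T • Q nn T) =
      if S = T then (c S * d S) • Q nn S else 0 := by
    intro S T
    rw [smul_mul_assoc, mul_smul_comm, smul_smul, Q_mul_Q hnn]
    by_cases h : S = T
    · subst h; simp
    · simp [h]
  rw [Finset.sum_congr rfl fun S _ => Finset.sum_congr rfl fun T _ => key S T]
  rw [Finset.sum_congr rfl fun S _ =>
    Finset.sum_ite_eq Finset.univ S (fun _ => (c S * d S) • Q nn S)]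
  simp [lc]

lemma lc_transpose (c : Finset (Fin rm1) → ℝ) : (lc nn c)ᵀ = lc nn c := by
  simp only [lc, transpose_sum, transpose_smul, Q_transpose]

lemma lc_trace (c : Finset (Fin rm1) → ℝ) (hnn : ∀ j, 2 ≤ nn j) :
    (lc nn c).trace = ∑ S : Finset (Fin rm1), c S * ∏ j ∈ S, ((nn j : ℝ) - 1) := by
  simp only [lc, trace_sum, trace_smul, trace_Q hnn, smul_eq_mul]

lemma lc_one (hnn : ∀ j, 2 ≤ nn j) : lc nn (fun _ => 1) = 1 := by
  simp only [lc, one_smul, sum_Q hnn]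

lemma sum_mulVec' {ι : Type*} (s : Finset ι)
    (f : ι → Matrix (∀ j, Fin (nn j)) (∀ j, Fin (nn j)) ℝ)
    (u : (∀ j, Fin (nn j)) → ℝ) : (∑ i ∈ s, f i) *ᵥ u = ∑ i ∈ s, f i *ᵥ u := by
  funext k
  simp only [mulVec, dotProduct, Matrix.sum_apply, Finset.sum_mul, Finset.sum_apply]
  rw [Finset.sum_comm]

lemma dotProduct_sum' {ι : Type*} (s : Finset ι) (u : (∀ j, Fin (nn j)) → ℝ)
    (f : ι → (∀ j, Fin (nn j)) → ℝ) : u ⬝ᵥ (∑ i ∈ s, f i) = ∑ i ∈ s, u ⬝ᵥ f i := by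
  simp only [dotProduct, Finset.sum_apply, Finset.mul_sum]
  rw [Finset.sum_comm]

lemma lc_dot (c : Finset (Fin rm1) → ℝ) (u : (∀ j, Fin (nn j)) → ℝ) :
    u ⬝ᵥ (lc nn c) *ᵥ u = ∑ S : Finset (Fin rm1), c S * (u ⬝ᵥ (Q nn S) *ᵥ u) := by
  rw [lc, sum_mulVec', dotProduct_sum']
  refine Finset.sum_congr rfl fun S _ => ?_
  rw [smul_mulVec, dotProduct_smul, smul_eq_mul]

lemma lc_posSemidef (hnn : ∀ j, 2 ≤ nn j) (c : Finset (Fin rm1) → ℝ)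
    (hc : ∀ S, 0 ≤ c S) : (lc nn c).PosSemidef := by
  refine Matrix.PosSemidef.of_dotProduct_mulVec_nonneg ?_ ?_
  · show (lc nn c)ᴴ = lc nn c
    rw [conjTranspose_eq_transpose_of_trivial, lc_transpose]
  · intro u
    rw [star_trivial, lc_dot]
    exact Finset.sum_nonneg fun S _ =>
      mul_nonneg (hc S) (Q_dot_nonneg hnn S u)

/-- eigenvalue of `SigmaCross nn v` on the eigenspace indexed by `S`. -/
noncomputable def lam (nn : Fin rm1 → ℕ) (v : Fin (rm1 + 1) → ℝ)
    (S : Finset (Fin rm1)) : ℝ :=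
  v (Fin.last rm1) + ∑ j, if S ⊆ {j} then (∏ i ∈ ({j}ᶜ : Finset (Fin rm1)), (nn i : ℝ)) * v j.castSucc else 0

lemma Q_empty_add_Q_singleton (hnn : ∀ j, 2 ≤ nn j) (j : Fin rm1)
    (x y : ∀ i, Fin (nn i)) :
    (∏ i ∈ ({j}ᶜ : Finset (Fin rm1)), (nn i : ℝ)) *
      ((Q nn ∅) x y + (Q nn {j}) x y) = if x j = y j then 1 else 0 := by
  classical
  have hprod : ∀ S : Finset (Fin rm1), ∀ hj : (j ∈ S ∨ j ∉ S),
      True := fun _ _ => trivial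
  have h1 : (Q nn ∅) x y = (nn j : ℝ)⁻¹ * ∏ i ∈ ({j}ᶜ : Finset (Fin rm1)), (nn i : ℝ)⁻¹ := by
    simp only [Q, of_apply, q, Finset.notMem_empty, if_false]
    rw [← Finset.prod_compl_mul_prod {j}]
    rw [Finset.prod_singleton, mul_comm]
  have h2 : (Q nn {j}) x y = ((if x j = y j then (1:ℝ) else 0) - (nn j : ℝ)⁻¹) *
      ∏ i ∈ ({j}ᶜ : Finset (Fin rm1)), (nn i : ℝ)⁻¹ := by
    simp only [Q, of_apply]
    rw [← Finset.prod_compl_mul_prod {j}, Finset.prod_singleton, mul_comm]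
    congr 1
    · simp [q]
    · refine Finset.prod_congr rfl fun i hi => ?_
      have : i ≠ j := by simpa using hi
      simp [q, this]
  have hcompl : (∏ i ∈ ({j}ᶜ : Finset (Fin rm1)), (nn i : ℝ)) *
      (∏ i ∈ ({j}ᶜ : Finset (Fin rm1)), (nn i : ℝ)⁻¹) = 1 := by
    rw [← Finset.prod_mul_distrib]
    refine Finset.prod_eq_one fun i _ => ?_
    have : (nn i : ℝ) ≠ 0 :=
      Nat.cast_ne_zero.2 (lt_of_lt_of_le (by norm_num) (hnn i)).ne'
    exact mul_inv_cancel₀ this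
  rw [h1, h2, ← add_mul, ← mul_assoc]
  rw [show (nn j : ℝ)⁻¹ + ((if x j = y j then (1:ℝ) else 0) - (nn j : ℝ)⁻¹) =
    (if x j = y j then (1:ℝ) else 0) from by ring]
  rw [mul_comm ((∏ i ∈ ({j}ᶜ : Finset (Fin rm1)), (nn i : ℝ))) _, mul_assoc,
    hcompl, mul_one]

lemma Sigma_eq_lc (hnn : ∀ j, 2 ≤ nn j) (v : Fin (rm1 + 1) → ℝ) :
    SigmaCross nn v = lc nn (lam nn v) := by
  classical
  have hsplit : lc nn (lam nn v) = v (Fin.last rm1) • (1 : Matrix (∀ j, Fin (nn j)) (∀ j, Fin (nn j)) ℝ) +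
      ∑ j : Fin rm1, ((∏ i ∈ ({j}ᶜ : Finset (Fin rm1)), (nn i:ℝ)) * v j.castSucc) •
        (Q nn ∅ + Q nn {j}) := by
    rw [lc]
    simp only [lam, add_smul, Finset.sum_add_distrib, Finset.sum_smul]
    congr 1
    · rw [← Finset.smul_sum, sum_Q hnn]
    · rw [Finset.sum_comm]
      refine Finset.sum_congr rfl fun j _ => ?_
      simp only [ite_smul, zero_smul]
      rw [← Finset.sum_filter]
      have hfil : (Finset.univ.filter (fun S : Finset (Fin rm1) => S ⊆ {j})) =
          {∅, ({j} : Finset (Fin rm1))} := by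
        ext S
        simp [Finset.subset_singleton_iff]
      rw [hfil, Finset.sum_pair (Ne.symm (Finset.singleton_ne_empty j)), smul_add]
  rw [hsplit]
  ext x y
  simp only [SigmaCross, of_apply, Matrix.add_apply, Matrix.smul_apply, Matrix.sum_apply,
    one_apply, smul_eq_mul]
  rw [add_comm]
  congr 1
  · rw [mul_ite, mul_one, mul_zero]
  · refine Finset.sum_congr rfl fun j _ => ?_
    rw [mul_assoc, mul_comm (v j.castSucc), ← mul_assoc,
      Q_empty_add_Q_singleton hnn j x y, ite_mul, one_mul, zero_mul]



section Psi

variable {ψ : Fin (rm1 + 1) → ℝ}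

lemma lam_pos (hψ : ∀ j : Fin rm1, 0 ≤ ψ j.castSucc) (hψr : 0 < ψ (Fin.last rm1))
    (S : Finset (Fin rm1)) : 0 < lam nn ψ S := by
  refine add_pos_of_pos_of_nonneg hψr (Finset.sum_nonneg fun j _ => ?_)
  split
  · exact mul_nonneg (Finset.prod_nonneg fun i _ => Nat.cast_nonneg _) (hψ j)
  · exact le_rfl

open scoped MatrixOrder in
lemma msqrt_Sigma_eq (hnn : ∀ j, 2 ≤ nn j) (hψ : ∀ j : Fin rm1, 0 ≤ ψ j.castSucc)
    (hψr : 0 < ψ (Fin.last rm1)) :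
    msqrt (SigmaCross nn ψ) = lc nn (fun S => Real.sqrt (lam nn ψ S)) := by
  have hpsd : (SigmaCross nn ψ).PosSemidef := by
    rw [Sigma_eq_lc hnn]
    exact lc_posSemidef hnn _ fun S => (lam_pos hψ hψr S).le
  have hB : (lc nn (fun S => Real.sqrt (lam nn ψ S))).PosSemidef :=
    lc_posSemidef hnn _ fun S => Real.sqrt_nonneg _
  have hsq : (lc nn (fun S => Real.sqrt (lam nn ψ S))) ^ 2 = SigmaCross nn ψ := by
    rw [pow_two, lc_mul_lc hnn, Sigma_eq_lc hnn]
    exact congrArg (lc nn) (funext fun S => Real.mul_self_sqrt (lam_pos hψ hψr S).le)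
  rw [msqrt, dif_pos hpsd]
  have hcfc : (hpsd.1.eigenvectorUnitary : Matrix _ _ ℝ) *
      diagonal (fun i => Real.sqrt (hpsd.1.eigenvalues i)) *
      (star hpsd.1.eigenvectorUnitary : Matrix _ _ ℝ) = CFC.sqrt (SigmaCross nn ψ) := by
    rw [CFC.sqrt_eq_cfc, cfc_nnreal_eq_real _ (SigmaCross nn ψ), hpsd.1.cfc_eq,
      IsHermitian.cfc, Unitary.conjStarAlgAut_apply]
    congr 2
    funext i
    congr 2
    funext k
    simp [max_eq_left (hpsd.eigenvalues_nonneg k)]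
  rw [hcfc, CFC.sqrt_eq_iff _ _ hpsd.nonneg hB.nonneg, ← pow_two]
  exact hsq

lemma inv_sqrt_lc (hnn : ∀ j, 2 ≤ nn j) (hψ : ∀ j : Fin rm1, 0 ≤ ψ j.castSucc)
    (hψr : 0 < ψ (Fin.last rm1)) :
    (lc nn (fun S => Real.sqrt (lam nn ψ S)))⁻¹ =
      lc nn (fun S => (Real.sqrt (lam nn ψ S))⁻¹) := by
  refine Matrix.inv_eq_right_inv ?_
  rw [lc_mul_lc hnn]
  rw [show (fun S => Real.sqrt (lam nn ψ S) * (Real.sqrt (lam nn ψ S))⁻¹) =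
    (fun _ : Finset (Fin rm1) => (1:ℝ)) from funext fun S => mul_inv_cancel₀
      (Real.sqrt_ne_zero'.2 (lam_pos hψ hψr S))]
  exact lc_one hnn

lemma M_eq_lc (hnn : ∀ j, 2 ≤ nn j) (hψ : ∀ j : Fin rm1, 0 ≤ ψ j.castSucc)
    (hψr : 0 < ψ (Fin.last rm1)) (v : Fin (rm1 + 1) → ℝ) :
    (msqrt (SigmaCross nn ψ))⁻¹ * SigmaCross nn v * (msqrt (SigmaCross nn ψ))⁻¹ =
      lc nn (fun S => lam nn v S / lam nn ψ S) := by
  rw [msqrt_Sigma_eq hnn hψ hψr, inv_sqrt_lc hnn hψ hψr, Sigma_eq_lc hnn v,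
    lc_mul_lc hnn, lc_mul_lc hnn]
  refine congrArg (lc nn) (funext fun S => ?_)
  have h : Real.sqrt (lam nn ψ S) * Real.sqrt (lam nn ψ S) = lam nn ψ S :=
    Real.mul_self_sqrt (lam_pos hψ hψr S).le
  have hne : Real.sqrt (lam nn ψ S) ≠ 0 := Real.sqrt_ne_zero'.2 (lam_pos hψ hψr S)
  rw [show (Real.sqrt (lam nn ψ S))⁻¹ * lam nn v S * (Real.sqrt (lam nn ψ S))⁻¹ =
    lam nn v S * (Real.sqrt (lam nn ψ S) * Real.sqrt (lam nn ψ S))⁻¹ from by ring,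
    h, div_eq_mul_inv]

end Psi

lemma frob_sq (hnn : ∀ j, 2 ≤ nn j) (c : Finset (Fin rm1) → ℝ) :
    ∑ x, ∑ y, ((lc nn c) x y) ^ 2 =
      ∑ S : Finset (Fin rm1), (c S) ^ 2 * ∏ j ∈ S, ((nn j : ℝ) - 1) := by
  have h1 : ∀ x, ∑ y, ((lc nn c) x y) ^ 2 = (lc nn c * (lc nn c)ᵀ) x x := by
    intro x
    simp [mul_apply, transpose_apply, sq]
  rw [Finset.sum_congr rfl fun x _ => h1 x]
  have h2 : ∑ x, (lc nn c * (lc nn c)ᵀ) x x = (lc nn c * (lc nn c)ᵀ).trace := rfl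
  rw [h2, lc_transpose, lc_mul_lc hnn, lc_trace _ hnn]
  exact Finset.sum_congr rfl fun S _ => by rw [sq]

lemma spec_le (hnn : ∀ j, 2 ≤ nn j) (c : Finset (Fin rm1) → ℝ) (m : ℝ) (hm : 0 ≤ m)
    (hc : ∀ S, |c S| ≤ m) : specNorm (lc nn c) ≤ m := by
  rw [specNorm]
  refine ContinuousLinearMap.opNorm_le_bound _ hm fun x => ?_
  have hu : ∃ u : (∀ j, Fin (nn j)) → ℝ, u = (WithLp.equiv 2 _) x := ⟨_, rfl⟩
  obtain ⟨u, hu⟩ := hu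
  have key : ∑ i, ((lc nn c *ᵥ u) i) ^ 2 ≤ m ^ 2 * ∑ i, (u i) ^ 2 := by
    have e1 : ∑ i, ((lc nn c *ᵥ u) i) ^ 2 = (lc nn c *ᵥ u) ⬝ᵥ (lc nn c *ᵥ u) := by
      simp [dotProduct, sq]
    have e2 : (lc nn c *ᵥ u) ⬝ᵥ (lc nn c *ᵥ u) =
        u ⬝ᵥ (lc nn (fun S => c S * c S)) *ᵥ u := by
      rw [dotProduct_mulVec, ← mulVec_transpose, lc_transpose, mulVec_mulVec,
        lc_mul_lc hnn, dotProduct_comm]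
    rw [e1, e2, lc_dot]
    have e3 : ∑ i, (u i) ^ 2 = u ⬝ᵥ (1 : Matrix _ _ ℝ) *ᵥ u := by
      simp [one_mulVec, dotProduct, sq]
    rw [e3, ← lc_one hnn, lc_dot, Finset.mul_sum]
    refine Finset.sum_le_sum fun S _ => ?_
    have hQ : 0 ≤ u ⬝ᵥ (Q nn S) *ᵥ u := Q_dot_nonneg hnn S u
    have : c S * c S ≤ m ^ 2 := by
      have := sq_abs (c S) ▸ pow_le_pow_left₀ (abs_nonneg _) (hc S) 2
      nlinarith [hc S, abs_nonneg (c S), sq_abs (c S)]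
    nlinarith
  have hnorm1 : ‖(toEuclideanCLM (𝕜 := ℝ) (lc nn c)) x‖ =
      Real.sqrt (∑ i, ((lc nn c *ᵥ u) i) ^ 2) := by
    rw [EuclideanSpace.norm_eq]
    congr 1
    refine Finset.sum_congr rfl fun i _ => ?_
    rw [Real.norm_eq_abs, sq_abs]
    congr 1
    have h1 := ofLp_toEuclideanCLM (n := (∀ j, Fin (nn j))) (𝕜 := ℝ) (lc nn c) x
    have h2 : (WithLp.equiv 2 _) ((toEuclideanCLM (𝕜 := ℝ) (lc nn c)) x) i =
        (lc nn c *ᵥ u) i := by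
      rw [hu]; exact congrFun h1 i
    exact h2
  have hnorm2 : ‖x‖ = Real.sqrt (∑ i, (u i) ^ 2) := by
    rw [EuclideanSpace.norm_eq]
    congr 1
    refine Finset.sum_congr rfl fun i _ => by rw [Real.norm_eq_abs, sq_abs, hu]; rfl
  rw [hnorm1, hnorm2]
  calc Real.sqrt (∑ i, ((lc nn c *ᵥ u) i) ^ 2) ≤ Real.sqrt (m ^ 2 * ∑ i, (u i) ^ 2) :=
        Real.sqrt_le_sqrt key
    _ = m * Real.sqrt (∑ i, (u i) ^ 2) := by
        rw [Real.sqrt_mul (sq_nonneg m), Real.sqrt_sq hm]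



/-- product of the `nn i` over `i ≠ j`. -/
noncomputable def Pj (nn : Fin rm1 → ℕ) (j : Fin rm1) : ℝ :=
  ∏ i ∈ ({j}ᶜ : Finset (Fin rm1)), (nn i : ℝ)

/-- dimension of the eigenspace indexed by `S`. -/
noncomputable def dS (nn : Fin rm1 → ℕ) (S : Finset (Fin rm1)) : ℝ :=
  ∏ j ∈ S, ((nn j : ℝ) - 1)

lemma lam_empty (v : Fin (rm1 + 1) → ℝ) :
    lam nn v ∅ = v (Fin.last rm1) + ∑ j, Pj nn j * v j.castSucc := by
  simp [lam, Pj, Finset.empty_subset]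

lemma lam_singleton (v : Fin (rm1 + 1) → ℝ) (j : Fin rm1) :
    lam nn v {j} = v (Fin.last rm1) + Pj nn j * v j.castSucc := by
  rw [lam]
  congr 1
  rw [Finset.sum_eq_single j]
  · rw [if_pos (Finset.Subset.refl _)]; rfl
  · intro i _ hij
    rw [if_neg]
    rw [Finset.singleton_subset_singleton]
    exact fun h => hij h.symm
  · exact fun h => absurd (Finset.mem_univ j) h

lemma lam_big (v : Fin (rm1 + 1) → ℝ) {S : Finset (Fin rm1)} (h2 : 2 ≤ S.card) :
    lam nn v S = v (Fin.last rm1) := by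
  rw [lam]
  rw [Finset.sum_eq_zero fun j _ => ?_, add_zero]
  rw [if_neg]
  intro hsub
  have := Finset.card_le_card hsub
  rw [Finset.card_singleton] at this
  omega

lemma sum_partition (f : Finset (Fin rm1) → ℝ) :
    ∑ S : Finset (Fin rm1), f S =
      f ∅ + (∑ j, f {j}) +
        ∑ S ∈ Finset.univ.filter (fun S : Finset (Fin rm1) => 2 ≤ S.card), f S := by
  classical
  rw [← Finset.sum_filter_add_sum_filter_not Finset.univ
    (fun S : Finset (Fin rm1) => S.card ≤ 1) f]
  congr 1
  · rw [← Finset.sum_filter_add_sum_filter_not (Finset.univ.filter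
      (fun S : Finset (Fin rm1) => S.card ≤ 1)) (fun S => S.card = 0) f]
    congr 1
    · have h1 : ((Finset.univ.filter (fun S : Finset (Fin rm1) => S.card ≤ 1)).filter
          (fun S => S.card = 0)) = {∅} := by
        ext S
        simp only [Finset.mem_filter, Finset.mem_univ, true_and, Finset.mem_singleton,
          Finset.card_eq_zero]
        constructor
        · rintro ⟨-, h⟩; exact h
        · rintro rfl; simp
      rw [h1, Finset.sum_singleton]
    · have h1 : ((Finset.univ.filter (fun S : Finset (Fin rm1) => S.card ≤ 1)).filter
          (fun S => ¬ S.card = 0)) =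
          Finset.univ.image (fun j : Fin rm1 => ({j} : Finset (Fin rm1))) := by
        ext S
        simp only [Finset.mem_filter, Finset.mem_univ, true_and, Finset.mem_image]
        constructor
        · rintro ⟨h1, h2⟩
          have : S.card = 1 := by omega
          obtain ⟨a, ha⟩ := Finset.card_eq_one.1 this
          exact ⟨a, ha.symm⟩
        · rintro ⟨a, rfl⟩
          simp
      rw [h1, Finset.sum_image (fun a _ b _ h => Finset.singleton_injective h)]
  · congr 1
    ext S
    simp only [Finset.mem_filter, Finset.mem_univ, true_and]
    omega

lemma dS_nonneg (hnn : ∀ j, 2 ≤ nn j) (S : Finset (Fin rm1)) : 0 ≤ dS nn S :=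
  Finset.prod_nonneg fun j _ => by
    have := hnn j
    have : (2:ℝ) ≤ (nn j : ℝ) := by exact_mod_cast this
    linarith

lemma dS_empty : dS nn ∅ = 1 := Finset.prod_empty

lemma dS_singleton (j : Fin rm1) : dS nn {j} = (nn j : ℝ) - 1 := by
  rw [dS]; exact Finset.prod_singleton _ _

lemma sum_dS (hnn : ∀ j, 2 ≤ nn j) :
    ∑ S : Finset (Fin rm1), dS nn S = ∏ j, (nn j : ℝ) := by
  have : ∀ j : Fin rm1, (nn j : ℝ) = ((nn j : ℝ) - 1) + 1 := fun j => by ring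
  rw [Finset.prod_congr rfl fun j _ => this j, Fintype.prod_add]
  refine Finset.sum_congr rfl fun S _ => ?_
  rw [dS, Finset.prod_const_one, mul_one]

lemma ntil_eq (hnn : ∀ j, 2 ≤ nn j) :
    ((∏ j, nn j : ℕ) : ℝ) - 1 - ∑ j, ((nn j : ℝ) - 1) =
      ∑ S ∈ Finset.univ.filter (fun S : Finset (Fin rm1) => 2 ≤ S.card), dS nn S := by
  have h1 := sum_partition (fun S => dS nn S)
  rw [sum_dS hnn, dS_empty] at h1
  have h2 : ∀ j : Fin rm1, dS nn {j} = (nn j : ℝ) - 1 := dS_singleton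
  rw [Finset.sum_congr rfl fun j _ => h2 j] at h1
  have h3 : ((∏ j, nn j : ℕ) : ℝ) = ∏ j, (nn j : ℝ) := by push_cast; ring
  rw [h3]
  linarith

lemma one_le_ntil (hr : 2 ≤ rm1) (hnn : ∀ j, 2 ≤ nn j) :
    1 ≤ ((∏ j, nn j : ℕ) : ℝ) - 1 - ∑ j, ((nn j : ℝ) - 1) := by
  rw [ntil_eq hnn]
  have hmem : (Finset.univ : Finset (Fin rm1)) ∈
      Finset.univ.filter (fun S : Finset (Fin rm1) => 2 ≤ S.card) := by
    simp only [Finset.mem_filter, Finset.mem_univ, true_and, Finset.card_univ,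
      Fintype.card_fin]
    exact hr
  have h1 : dS nn (Finset.univ : Finset (Fin rm1)) ≤ _ :=
    Finset.single_le_sum (f := dS nn) (fun S _ => dS_nonneg hnn S) hmem
  refine le_trans ?_ h1
  have : (1:ℝ) = ∏ _j : Fin rm1, (1:ℝ) := (Finset.prod_const_one).symm
  rw [this]
  refine Finset.prod_le_prod (fun j _ => by norm_num) fun j _ => ?_
  have := hnn j
  have : (2:ℝ) ≤ (nn j : ℝ) := by exact_mod_cast this
  linarith

end Stmt17Aux


set_option maxHeartbeats 2000000 in
open Stmt17Aux in
/-- Crossed random effects, `r ≥ 3` and `n_j ≥ 2`: for every `ψ` with `ψ_j ≥ 0`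
(`j < r`), `ψ_r > 0`, and every `v ≠ 0` with `‖A(v,ψ)‖_F ≠ 0`,
`a(v,ψ)² ≤ ∑_j (n_j − 1)⁻¹ + (r−2)²/ñ ≤ (r−1)/(n_min − 1) + (r−2)²/ñ`. -/
theorem stmt17 {rm1 : ℕ} (hr : 2 ≤ rm1) (nn : Fin rm1 → ℕ) (hnn : ∀ j, 2 ≤ nn j)
    (nmin : ℕ) (hmin : IsLeast (Set.range nn) nmin)
    (ψ : Fin (rm1 + 1) → ℝ) (hψ : ∀ j : Fin rm1, 0 ≤ ψ j.castSucc)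
    (hψr : 0 < ψ (Fin.last rm1)) :
    ∀ v : Fin (rm1 + 1) → ℝ, v ≠ 0 →
      frobNorm ((msqrt (SigmaCross nn ψ))⁻¹ * SigmaCross nn v *
        (msqrt (SigmaCross nn ψ))⁻¹) ≠ 0 →
      (specNorm ((msqrt (SigmaCross nn ψ))⁻¹ * SigmaCross nn v *
            (msqrt (SigmaCross nn ψ))⁻¹) /
          frobNorm ((msqrt (SigmaCross nn ψ))⁻¹ * SigmaCross nn v *
            (msqrt (SigmaCross nn ψ))⁻¹)) ^ 2
        ≤ (∑ j, ((nn j : ℝ) - 1)⁻¹) +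
            ((rm1 : ℝ) - 1) ^ 2 /
              ((∏ j, nn j : ℕ) - 1 - ∑ j, ((nn j : ℝ) - 1))
      ∧ (∑ j, ((nn j : ℝ) - 1)⁻¹) +
            ((rm1 : ℝ) - 1) ^ 2 /
              ((∏ j, nn j : ℕ) - 1 - ∑ j, ((nn j : ℝ) - 1))
          ≤ (rm1 : ℝ) / ((nmin : ℝ) - 1) +
            ((rm1 : ℝ) - 1) ^ 2 /
              ((∏ j, nn j : ℕ) - 1 - ∑ j, ((nn j : ℝ) - 1)) := by
  intro v _hv hfrob
  classical
  -- notation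
  set ntil : ℝ := ((∏ j, nn j : ℕ) : ℝ) - 1 - ∑ j, ((nn j : ℝ) - 1) with hntil
  have hnt1 : 1 ≤ ntil := one_le_ntil hr hnn
  have hnt0 : 0 < ntil := lt_of_lt_of_le one_pos hnt1
  set R : ℝ := (∑ j, ((nn j : ℝ) - 1)⁻¹) + ((rm1 : ℝ) - 1) ^ 2 / ntil with hR
  have hnnR : ∀ j : Fin rm1, (1:ℝ) ≤ (nn j : ℝ) - 1 := by
    intro j
    have := hnn j
    have : (2:ℝ) ≤ (nn j : ℝ) := by exact_mod_cast this
    linarith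
  have hRnonneg : 0 ≤ R := by
    refine add_nonneg (Finset.sum_nonneg fun j _ => ?_) ?_
    · exact inv_nonneg.2 (by linarith [hnnR j])
    · exact div_nonneg (sq_nonneg _) hnt0.le
  set c : Finset (Fin rm1) → ℝ := fun S => lam nn v S / lam nn ψ S with hc
  have hM := M_eq_lc (nn := nn) hnn hψ hψr v
  rw [hM] at hfrob ⊢
  set F2 : ℝ := ∑ S : Finset (Fin rm1), (c S) ^ 2 * dS nn S with hF2
  have hfrobM : frobNorm (lc nn c) = Real.sqrt F2 := by
    rw [frobNorm, hF2]
    congr 1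
    rw [frob_sq hnn c]
    rfl
  have hF2nonneg : 0 ≤ F2 :=
    Finset.sum_nonneg fun S _ => mul_nonneg (sq_nonneg _) (dS_nonneg hnn S)
  have hF2pos : 0 < F2 := by
    rcases lt_or_eq_of_le hF2nonneg with h | h
    · exact h
    · exact absurd (by rw [hfrobM, ← h, Real.sqrt_zero]) hfrob
  set b : ℝ := v (Fin.last rm1) / ψ (Fin.last rm1) with hb
  have hcS2 : ∀ S : Finset (Fin rm1), 2 ≤ S.card → c S = b := by
    intro S hS
    rw [hc]
    simp only
    rw [lam_big v hS, lam_big ψ hS, hb]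
  -- decomposition of F2
  have hF2dec : F2 = (c ∅) ^ 2 + (∑ j, (c {j}) ^ 2 * ((nn j : ℝ) - 1)) + b ^ 2 * ntil := by
    rw [hF2, sum_partition (fun S => (c S) ^ 2 * dS nn S), dS_empty, mul_one]
    congr 1
    · congr 1
      exact Finset.sum_congr rfl fun j _ => by rw [dS_singleton]
    · rw [show ∑ S ∈ Finset.univ.filter (fun S : Finset (Fin rm1) => 2 ≤ S.card),
        (c S) ^ 2 * dS nn S = ∑ S ∈ Finset.univ.filter
          (fun S : Finset (Fin rm1) => 2 ≤ S.card), b ^ 2 * dS nn S from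
        Finset.sum_congr rfl fun S hS => by
          rw [hcS2 S (Finset.mem_filter.1 hS).2], ← Finset.mul_sum, ← ntil_eq hnn]
  have hpart2 : 0 ≤ ∑ j, (c {j}) ^ 2 * ((nn j : ℝ) - 1) :=
    Finset.sum_nonneg fun j _ => mul_nonneg (sq_nonneg _) (by linarith [hnnR j])
  have hpart3 : 0 ≤ b ^ 2 * ntil := mul_nonneg (sq_nonneg _) hnt0.le
  -- spectral bound
  have huniv_ne : (Finset.univ : Finset (Finset (Fin rm1))).Nonempty := ⟨∅, Finset.mem_univ _⟩
  obtain ⟨S0, -, hS0⟩ := Finset.exists_mem_eq_sup' huniv_ne (fun S => |c S|)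
  have hble : ∀ S, |c S| ≤ |c S0| := fun S =>
    hS0 ▸ Finset.le_sup' (fun S => |c S|) (Finset.mem_univ S)
  have hmnn : (0:ℝ) ≤ |c S0| := abs_nonneg _
  have hspec : specNorm (lc nn c) ≤ |c S0| := spec_le hnn c _ hmnn hble
  -- key inequality
  have hkey : |c S0| ^ 2 ≤ R * F2 := by
    rw [sq_abs]
    by_cases h0 : S0 = ∅
    · -- Cauchy–Schwarz case
      subst h0
      have hlampos := fun S => lam_pos (nn := nn) hψ hψr S
      -- |c ∅| ≤ ∑ |c {j}| + (rm1 - 1) * |b|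
      have hlamdec : lam nn v ∅ = (∑ j, lam nn v {j}) - ((rm1 : ℝ) - 1) * v (Fin.last rm1) := by
        rw [lam_empty]
        rw [Finset.sum_congr rfl fun j _ => lam_singleton v j, Finset.sum_add_distrib,
          Finset.sum_const, Finset.card_univ, Fintype.card_fin, nsmul_eq_mul]
        ring
      have hr1 : (1:ℝ) ≤ (rm1 : ℝ) - 1 := by
        have : (2:ℝ) ≤ (rm1 : ℝ) := by exact_mod_cast hr
        linarith
      have habs : |lam nn v ∅| ≤ (∑ j, |lam nn v {j}|) + ((rm1 : ℝ) - 1) * |v (Fin.last rm1)| := by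
        rw [hlamdec]
        refine le_trans (abs_sub _ _) (add_le_add ?_ ?_)
        · exact Finset.abs_sum_le_sum_abs _ _
        · rw [abs_mul, abs_of_nonneg (by linarith : (0:ℝ) ≤ (rm1:ℝ) - 1)]
      have hcabs : ∀ j : Fin rm1, |c {j}| = |lam nn v {j}| / lam nn ψ {j} := by
        intro j
        rw [hc]
        simp only
        rw [abs_div, abs_of_pos (hlampos {j})]
      have hbabs : |b| = |v (Fin.last rm1)| / ψ (Fin.last rm1) := by
        rw [hb, abs_div, abs_of_pos hψr]
      have hψemp_s : ∀ j : Fin rm1, lam nn ψ {j} ≤ lam nn ψ ∅ := by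
        intro j
        rw [lam_empty, lam_singleton]
        have : Pj nn j * ψ j.castSucc ≤ ∑ i, Pj nn i * ψ i.castSucc := by
          refine Finset.single_le_sum (f := fun i => Pj nn i * ψ i.castSucc)
            (fun i _ => ?_) (Finset.mem_univ j)
          exact mul_nonneg (Finset.prod_nonneg fun _ _ => Nat.cast_nonneg _) (hψ i)
        linarith
      have hψemp_r : ψ (Fin.last rm1) ≤ lam nn ψ ∅ := by
        rw [lam_empty]
        have : 0 ≤ ∑ i, Pj nn i * ψ i.castSucc :=
          Finset.sum_nonneg fun i _ =>
            mul_nonneg (Finset.prod_nonneg fun _ _ => Nat.cast_nonneg _) (hψ i)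
        linarith
      have hempty : |c ∅| ≤ (∑ j, |c {j}|) + ((rm1 : ℝ) - 1) * |b| := by
        have e1 : |c ∅| = |lam nn v ∅| / lam nn ψ ∅ := by
          rw [hc]
          simp only
          rw [abs_div, abs_of_pos (hlampos ∅)]
        rw [e1]
        calc |lam nn v ∅| / lam nn ψ ∅
            ≤ ((∑ j, |lam nn v {j}|) + ((rm1 : ℝ) - 1) * |v (Fin.last rm1)|) / lam nn ψ ∅ :=
              (div_le_div_iff_of_pos_right (hlampos ∅)).2 habs
          _ = (∑ j, |lam nn v {j}| / lam nn ψ ∅) +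
                ((rm1 : ℝ) - 1) * (|v (Fin.last rm1)| / lam nn ψ ∅) := by
              rw [add_div, Finset.sum_div, mul_div_assoc]
          _ ≤ (∑ j, |c {j}|) + ((rm1 : ℝ) - 1) * |b| := by
              refine add_le_add (Finset.sum_le_sum fun j _ => ?_) ?_
              · rw [hcabs j]
                exact div_le_div_of_nonneg_left (abs_nonneg _) (hlampos {j}) (hψemp_s j)
              · rw [hbabs]
                refine mul_le_mul_of_nonneg_left ?_ (by linarith)
                exact div_le_div_of_nonneg_left (abs_nonneg _) hψr hψemp_r
      -- Cauchy–Schwarz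
      set f : Fin (rm1 + 1) → ℝ := fun k =>
        Fin.lastCases (((rm1 : ℝ) - 1) / Real.sqrt ntil)
          (fun j => Real.sqrt (((nn j : ℝ) - 1)⁻¹)) k with hf
      set g : Fin (rm1 + 1) → ℝ := fun k =>
        Fin.lastCases (Real.sqrt ntil * |b|)
          (fun j => Real.sqrt ((nn j : ℝ) - 1) * |c {j}|) k with hg
      have hsqrt_ne : ∀ j : Fin rm1, Real.sqrt ((nn j : ℝ) - 1) ≠ 0 := fun j =>
        Real.sqrt_ne_zero'.2 (by linarith [hnnR j])
      have hsqnt_ne : Real.sqrt ntil ≠ 0 := Real.sqrt_ne_zero'.2 hnt0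
      have hfg : ∑ k, f k * g k = (∑ j, |c {j}|) + ((rm1 : ℝ) - 1) * |b| := by
        rw [Fin.sum_univ_castSucc]
        congr 1
        · refine Finset.sum_congr rfl fun j _ => ?_
          rw [hf, hg]
          simp only [Fin.lastCases_castSucc]
          rw [Real.sqrt_inv, ← mul_assoc, inv_mul_cancel₀ (hsqrt_ne j), one_mul]
        · rw [hf, hg]
          simp only [Fin.lastCases_last]
          field_simp
      have hf2 : ∑ k, (f k) ^ 2 = R := by
        rw [Fin.sum_univ_castSucc, hR]
        congr 1
        · refine Finset.sum_congr rfl fun j _ => ?_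
          rw [hf]
          simp only [Fin.lastCases_castSucc]
          exact Real.sq_sqrt (inv_nonneg.2 (by linarith [hnnR j]))
        · rw [hf]
          simp only [Fin.lastCases_last]
          rw [div_pow, Real.sq_sqrt hnt0.le]
      have hg2 : ∑ k, (g k) ^ 2 = (∑ j, (c {j}) ^ 2 * ((nn j : ℝ) - 1)) + b ^ 2 * ntil := by
        rw [Fin.sum_univ_castSucc]
        congr 1
        · refine Finset.sum_congr rfl fun j _ => ?_
          rw [hg]
          simp only [Fin.lastCases_castSucc]
          rw [mul_pow, sq_abs, Real.sq_sqrt (by linarith [hnnR j] : (0:ℝ) ≤ (nn j : ℝ) - 1)]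
          ring
        · rw [hg]
          simp only [Fin.lastCases_last]
          rw [mul_pow, sq_abs, Real.sq_sqrt hnt0.le]
          ring
      have hCS := Finset.sum_mul_sq_le_sq_mul_sq Finset.univ f g
      rw [hfg, hf2, hg2] at hCS
      have step1 : (c ∅) ^ 2 ≤ ((∑ j, |c {j}|) + ((rm1 : ℝ) - 1) * |b|) ^ 2 := by
        rw [← sq_abs (c ∅)]
        exact pow_le_pow_left₀ (abs_nonneg _) hempty 2
      have step2 : R * ((∑ j, (c {j}) ^ 2 * ((nn j : ℝ) - 1)) + b ^ 2 * ntil) ≤ R * F2 := by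
        refine mul_le_mul_of_nonneg_left ?_ hRnonneg
        rw [hF2dec]
        nlinarith [sq_nonneg (c ∅)]
      calc (c ∅) ^ 2 ≤ ((∑ j, |c {j}|) + ((rm1 : ℝ) - 1) * |b|) ^ 2 := step1
        _ ≤ R * ((∑ j, (c {j}) ^ 2 * ((nn j : ℝ) - 1)) + b ^ 2 * ntil) := hCS
        _ ≤ R * F2 := step2
    · by_cases h1 : S0.card = 1
      · obtain ⟨j, rfl⟩ := Finset.card_eq_one.1 h1
        have hterm : (c {j}) ^ 2 * ((nn j : ℝ) - 1) ≤ F2 := by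
          rw [hF2dec]
          have : (c {j}) ^ 2 * ((nn j : ℝ) - 1) ≤
              ∑ i, (c {i}) ^ 2 * ((nn i : ℝ) - 1) :=
            Finset.single_le_sum (f := fun i => (c {i}) ^ 2 * ((nn i : ℝ) - 1))
              (fun i _ => mul_nonneg (sq_nonneg _) (by linarith [hnnR i]))
              (Finset.mem_univ j)
          nlinarith [sq_nonneg (c ∅)]
        have hRj : ((nn j : ℝ) - 1)⁻¹ ≤ R := by
          rw [hR]
          have h2 : ((nn j : ℝ) - 1)⁻¹ ≤ ∑ i, ((nn i : ℝ) - 1)⁻¹ :=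
            Finset.single_le_sum (f := fun i => ((nn i : ℝ) - 1)⁻¹)
              (fun i _ => inv_nonneg.2 (by linarith [hnnR i]))
              (Finset.mem_univ j)
          have h3 : 0 ≤ ((rm1 : ℝ) - 1) ^ 2 / ntil := div_nonneg (sq_nonneg _) hnt0.le
          linarith
        have hone : 1 ≤ R * ((nn j : ℝ) - 1) := by
          have := mul_le_mul_of_nonneg_right hRj (by linarith [hnnR j] : (0:ℝ) ≤ (nn j : ℝ) - 1)
          rwa [inv_mul_cancel₀ (by linarith [hnnR j] : ((nn j : ℝ) - 1) ≠ 0)] at this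
        have k1 : R * ((c {j}) ^ 2 * ((nn j : ℝ) - 1)) ≤ R * F2 :=
          mul_le_mul_of_nonneg_left hterm hRnonneg
        nlinarith [sq_nonneg (c {j})]
      · have h2 : 2 ≤ S0.card := by
          have : S0.card ≠ 0 := fun h => h0 (Finset.card_eq_zero.1 h)
          omega
        rw [hcS2 S0 h2]
        have hterm : b ^ 2 * ntil ≤ F2 := by
          rw [hF2dec]
          nlinarith [sq_nonneg (c ∅), hpart2]
        have hr1 : (1:ℝ) ≤ ((rm1 : ℝ) - 1) ^ 2 := by
          have : (2:ℝ) ≤ (rm1 : ℝ) := by exact_mod_cast hr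
          nlinarith
        have hRj : ((rm1 : ℝ) - 1) ^ 2 / ntil ≤ R := by
          rw [hR]
          have : 0 ≤ ∑ i, ((nn i : ℝ) - 1)⁻¹ :=
            Finset.sum_nonneg fun i _ => inv_nonneg.2 (by linarith [hnnR i])
          linarith
        have hone : 1 ≤ R * ntil := by
          have := mul_le_mul_of_nonneg_right hRj hnt0.le
          rw [div_mul_cancel₀ _ hnt0.ne'] at this
          linarith
        have k1 : R * (b ^ 2 * ntil) ≤ R * F2 := mul_le_mul_of_nonneg_left hterm hRnonneg
        nlinarith [sq_nonneg b]
  constructor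
  · -- first inequality
    rw [div_pow, hfrobM, Real.sq_sqrt hF2nonneg, div_le_iff₀ hF2pos]
    have hspec2 : (specNorm (lc nn c)) ^ 2 ≤ |c S0| ^ 2 := by
      have h0 : 0 ≤ specNorm (lc nn c) := norm_nonneg _
      exact pow_le_pow_left₀ h0 hspec 2
    calc (specNorm (lc nn c)) ^ 2 ≤ |c S0| ^ 2 := hspec2
      _ ≤ R * F2 := hkey
  · -- second inequality
    refine add_le_add_left ?_ _
    obtain ⟨⟨j0, hj0⟩, hlb⟩ := hmin
    have hnmin2 : 2 ≤ nmin := hj0 ▸ hnn j0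
    have hnminR : (1:ℝ) ≤ (nmin : ℝ) - 1 := by
      have : (2:ℝ) ≤ (nmin : ℝ) := by exact_mod_cast hnmin2
      linarith
    have h1 : ∀ j : Fin rm1, ((nn j : ℝ) - 1)⁻¹ ≤ ((nmin : ℝ) - 1)⁻¹ := by
      intro j
      refine inv_anti₀ (by linarith) ?_
      have : nmin ≤ nn j := hlb ⟨j, rfl⟩
      have : (nmin : ℝ) ≤ (nn j : ℝ) := by exact_mod_cast this
      linarith
    calc ∑ j, ((nn j : ℝ) - 1)⁻¹ ≤ ∑ _j : Fin rm1, ((nmin : ℝ) - 1)⁻¹ :=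
          Finset.sum_le_sum fun j _ => h1 j
      _ = (rm1 : ℝ) * ((nmin : ℝ) - 1)⁻¹ := by
          rw [Finset.sum_const, Finset.card_univ, Fintype.card_fin, nsmul_eq_mul]
      _ = (rm1 : ℝ) / ((nmin : ℝ) - 1) := (div_eq_mul_inv _ _).symm
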